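/- U^r is a C² function on [0,∞)×ℝ which solves the Cauchy problem ∂_t U^r + ∂_x(f(U^r)) = 0 for t > 0, x ∈ ℝ, with initial data U^r(0,x) = λ^{−1}((λ₋+λ₊)/2 + ((λ₊−λ₋)/2)·tanh x) and far-field limits lim_{x→±∞} U^r(t,x) = u_± for each t ≥ 0. Moreover, for all t ≥ 0 and x ∈ ℝ one has u₋ < U^r(t,x) < u₊ and ∂_x U^r(t,x) > 0. -/

import Mathlib

open Real MeasureTheory Filter Set

/-- The smooth monotone initial datum `w₀(x) = (w₋+w₊)/2 + ((w₊−w₋)/2)·tanh x`. -/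
noncomputable def w0 (wm wp x : ℝ) : ℝ := (wm + wp) / 2 + ((wp - wm) / 2) * Real.tanh x

/-! ### Auxiliary lemmas on `tanh` -/

lemma my_contDiff_tanh {n : WithTop ℕ∞} : ContDiff ℝ n Real.tanh := by
  have : Real.tanh = fun x => Real.sinh x / Real.cosh x := funext Real.tanh_eq_sinh_div_cosh
  rw [this]
  exact Real.contDiff_sinh.div Real.contDiff_cosh (fun x => (Real.cosh_pos x).ne')

lemma my_hasDerivAt_tanh (x : ℝ) : HasDerivAt Real.tanh (1 / Real.cosh x ^ 2) x := by
  have h : HasDerivAt (fun x => Real.sinh x / Real.cosh x)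
      ((Real.cosh x * Real.cosh x - Real.sinh x * Real.sinh x) / Real.cosh x ^ 2) x :=
    (Real.hasDerivAt_sinh x).div (Real.hasDerivAt_cosh x) (Real.cosh_pos x).ne'
  have e : Real.tanh = fun x => Real.sinh x / Real.cosh x := funext Real.tanh_eq_sinh_div_cosh
  rw [e]
  convert h using 2
  have := Real.cosh_sq_sub_sinh_sq x
  nlinarith

lemma my_tanh_lt_one (x : ℝ) : Real.tanh x < 1 := by
  rw [Real.tanh_eq_sinh_div_cosh, div_lt_one (Real.cosh_pos x)]
  nlinarith [Real.cosh_sub_sinh x, Real.exp_pos (-x)]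

lemma my_neg_one_lt_tanh (x : ℝ) : -1 < Real.tanh x := by
  rw [Real.tanh_eq_sinh_div_cosh, lt_div_iff₀ (Real.cosh_pos x)]
  nlinarith [Real.cosh_add_sinh x, Real.exp_pos x]

lemma my_tendsto_tanh_atTop : Tendsto Real.tanh atTop (nhds 1) := by
  have e : ∀ x : ℝ, Real.tanh x = (1 - Real.exp (-2*x)) / (1 + Real.exp (-2*x)) := by
    intro x
    rw [Real.tanh_eq_sinh_div_cosh, Real.sinh_eq, Real.cosh_eq]
    have h1 : Real.exp (-2*x) = Real.exp (-x) * Real.exp (-x) := by rw [← Real.exp_add]; ring_nf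
    have h2 : Real.exp x * Real.exp (-x) = 1 := by rw [← Real.exp_add]; simp
    have h3 := Real.exp_pos x
    have h4 := Real.exp_pos (-x)
    rw [div_eq_div_iff (by positivity) (by positivity)]
    nlinarith [h1, h2]
  have h : Tendsto (fun x : ℝ => Real.exp (-2*x)) atTop (nhds 0) := by
    apply Real.tendsto_exp_atBot.comp
    have h2 : Tendsto (fun x : ℝ => 2*x) atTop atTop :=
      Tendsto.const_mul_atTop (by norm_num) tendsto_id
    have h3 := tendsto_neg_atTop_atBot.comp h2
    have e2 : (Neg.neg ∘ fun x : ℝ => 2*x) = fun x : ℝ => -2*x := by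
      funext x; show -(2*x) = -2*x; ring
    rwa [e2] at h3
  rw [show Real.tanh = fun x => (1 - Real.exp (-2*x)) / (1 + Real.exp (-2*x)) from funext e]
  have : Tendsto (fun x : ℝ => (1 - Real.exp (-2*x)) / (1 + Real.exp (-2*x))) atTop
      (nhds ((1 - 0) / (1 + 0))) :=
    Tendsto.div ((tendsto_const_nhds).sub h) ((tendsto_const_nhds).add h) (by norm_num)
  simpa using this

lemma my_tendsto_tanh_atBot : Tendsto Real.tanh atBot (nhds (-1)) := by
  have h := my_tendsto_tanh_atTop.comp tendsto_neg_atBot_atTop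
  have e : (Real.tanh ∘ fun x : ℝ => -x) = fun x => - Real.tanh x := by
    funext x; simp [Function.comp, Real.tanh_neg]
  rw [e] at h
  have h2 := h.neg
  simpa using h2

/-! ### Auxiliary lemmas on `w0` -/

noncomputable def w0d (wm wp x : ℝ) : ℝ := ((wp - wm) / 2) * (1 / Real.cosh x ^ 2)

section W0
variable {wm wp : ℝ} (h : wm < wp)

lemma w0_contDiff {n : WithTop ℕ∞} : ContDiff ℝ n (w0 wm wp) :=
  contDiff_const.add (contDiff_const.mul my_contDiff_tanh)

lemma hasDerivAt_w0 (x : ℝ) : HasDerivAt (w0 wm wp) (w0d wm wp x) x :=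
  ((my_hasDerivAt_tanh x).const_mul ((wp - wm)/2)).const_add _

include h

lemma w0d_pos (x : ℝ) : 0 < w0d wm wp x := by
  have h1 := Real.cosh_pos x
  have h2 : (0:ℝ) < wp - wm := sub_pos.2 h
  unfold w0d
  positivity

lemma w0_mem (x : ℝ) : w0 wm wp x ∈ Ioo wm wp := by
  have h1 := my_tanh_lt_one x
  have h2 := my_neg_one_lt_tanh x
  constructor <;> (unfold w0; nlinarith)

omit h in
lemma w0_tendsto_atTop : Tendsto (w0 wm wp) atTop (nhds wp) := by
  have : Tendsto (w0 wm wp) atTop (nhds ((wm+wp)/2 + ((wp-wm)/2) * 1)) :=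
    tendsto_const_nhds.add (tendsto_const_nhds.mul my_tendsto_tanh_atTop)
  convert this using 2; ring

omit h in
lemma w0_tendsto_atBot : Tendsto (w0 wm wp) atBot (nhds wm) := by
  have : Tendsto (w0 wm wp) atBot (nhds ((wm+wp)/2 + ((wp-wm)/2) * (-1))) :=
    tendsto_const_nhds.add (tendsto_const_nhds.mul my_tendsto_tanh_atBot)
  convert this using 2; ring

end W0

/-! ### Smoothness of left inverses -/

lemma contDiffAt_of_left_inv {l g : ℝ → ℝ} {u c : ℝ} (hl : ContDiffAt ℝ 2 l u) (hc : c ≠ 0)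
    (hd : HasDerivAt l c u) (hg : ∀ᶠ x in nhds u, g (l x) = x) : ContDiffAt ℝ 2 g (l u) := by
  set e : ℝ ≃L[ℝ] ℝ := ContinuousLinearEquiv.unitsEquivAut ℝ (Units.mk0 c hc) with he
  have hfd : HasFDerivAt l (e : ℝ →L[ℝ] ℝ) u := by
    have := hd.hasFDerivAt
    have heq : (e : ℝ →L[ℝ] ℝ) = ContinuousLinearMap.toSpanSingleton ℝ c := by
      ext; simp [he]
    rw [heq]; exact this
  have h2 : (2:WithTop ℕ∞) ≠ 0 := by norm_num
  have hG : ContDiffAt ℝ 2 (hl.localInverse hfd h2) (l u) := hl.to_localInverse hfd h2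
  apply hG.congr_of_eventuallyEq
  exact (hl.hasStrictFDerivAt' hfd h2).localInverse_unique hg

/-! ### Lemmas about `deriv f` and `linv` -/

section Main
variable {um up : ℝ} (hu : um < up) {f : ℝ → ℝ} (hf : ContDiff ℝ 3 f)
  (hconv : ∀ u ∈ Icc um up, 0 < deriv (deriv f) u)
  {linv : ℝ → ℝ} (hlinv : ∀ u ∈ Icc um up, linv (deriv f u) = u)

include hf in
lemma hl2 : ContDiff ℝ 2 (deriv f) := by
  have : ContDiff ℝ (2+1) f := by norm_num at hf ⊢; exact hf
  exact (contDiff_succ_iff_deriv.mp this).2.2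

include hf hconv in
lemma l_smono : StrictMonoOn (deriv f) (Icc um up) := by
  apply strictMonoOn_of_deriv_pos (convex_Icc um up) (hl2 hf).continuous.continuousOn
  intro x hx
  rw [interior_Icc] at hx
  exact hconv x (Ioo_subset_Icc_self hx)

include hu hf hlinv in
lemma linv_spec : ∀ z ∈ Ioo (deriv f um) (deriv f up),
    deriv f (linv z) = z ∧ linv z ∈ Ioo um up := by
  intro z hz
  obtain ⟨u, hu1, hu2⟩ := intermediate_value_Ioo hu.le (hl2 hf).continuous.continuousOn hz
  have : linv z = u := by rw [← hu2]; exact hlinv u (Ioo_subset_Icc_self hu1)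
  rw [this, hu2]
  exact ⟨rfl, hu1⟩

include hlinv in
lemma linv_left_inv_ev (u : ℝ) (humem : u ∈ Ioo um up) :
    ∀ᶠ x in nhds u, linv (deriv f x) = x := by
  filter_upwards [isOpen_Ioo.eventually_mem humem] with x hx
  exact hlinv x (Ioo_subset_Icc_self hx)

include hu hf hconv hlinv in
lemma linv_contDiffAt : ∀ z ∈ Ioo (deriv f um) (deriv f up), ContDiffAt ℝ 2 linv z := by
  intro z hz
  obtain ⟨hlz, hmem⟩ := linv_spec hu hf hlinv z hz
  set u := linv z with hu'
  have hc : deriv (deriv f) u ≠ 0 := (hconv u (Ioo_subset_Icc_self hmem)).ne'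
  have hd : HasDerivAt (deriv f) (deriv (deriv f) u) u :=
    (((hl2 hf).differentiable (by norm_num)) u).hasDerivAt
  have := contDiffAt_of_left_inv (hl2 hf).contDiffAt hc hd
    (linv_left_inv_ev hlinv u hmem)
  rwa [hlz] at this

include hu hf hconv hlinv in
lemma linv_hasDerivAt : ∀ z ∈ Ioo (deriv f um) (deriv f up),
    HasDerivAt linv (deriv (deriv f) (linv z))⁻¹ z := by
  intro z hz
  obtain ⟨hlz, hmem⟩ := linv_spec hu hf hlinv z hz
  set u := linv z with hu'
  have hc : deriv (deriv f) u ≠ 0 := (hconv u (Ioo_subset_Icc_self hmem)).ne'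
  have hd : HasDerivAt (deriv f) (deriv (deriv f) u) u :=
    (((hl2 hf).differentiable (by norm_num)) u).hasDerivAt
  have hstrict : HasStrictDerivAt (deriv f) (deriv (deriv f) u) u :=
    (hl2 hf).contDiffAt.hasStrictDerivAt' hd (by norm_num)
  have := (hstrict.to_local_left_inverse hc (linv_left_inv_ev hlinv u hmem)).hasDerivAt
  rwa [hlz] at this

end Main

/-! ### Lemmas about `Y` -/

section YPart
variable {wm wp : ℝ} (hw : wm < wp) {Y : ℝ → ℝ → ℝ}
  (hY : ∀ t x : ℝ, 0 ≤ t → Y t x + t * w0 wm wp (Y t x) = x)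

lemma psi_hasDerivAt (t y : ℝ) :
    HasDerivAt (fun y => y + t * w0 wm wp y) (1 + t * w0d wm wp y) y :=
  (hasDerivAt_id y).add ((hasDerivAt_w0 y).const_mul t)

include hw in
lemma psi_smono {t : ℝ} (ht : 0 ≤ t) : StrictMono (fun y => y + t * w0 wm wp y) := by
  apply strictMono_of_deriv_pos
  intro y
  rw [(psi_hasDerivAt t y).deriv]
  have := w0d_pos hw y
  nlinarith

include hw hY in
lemma Y_unique {t x y : ℝ} (ht : 0 ≤ t) (hy : y + t * w0 wm wp y = x) : Y t x = y := by
  apply (psi_smono hw ht).injective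
  show Y t x + t * w0 wm wp (Y t x) = y + t * w0 wm wp y
  rw [hY t x ht, hy]

end YPart

noncomputable def Psi (wm wp : ℝ) : ℝ × ℝ → ℝ × ℝ :=
  fun p => (p.1, p.2 + p.1 * w0 wm wp p.2)

lemma psi_contDiff {wm wp : ℝ} {n : WithTop ℕ∞} : ContDiff ℝ n (Psi wm wp) :=
  contDiff_fst.prodMk (contDiff_snd.add (contDiff_fst.mul (w0_contDiff.comp contDiff_snd)))

noncomputable def Jmap (b c : ℝ) : ℝ × ℝ →L[ℝ] ℝ × ℝ :=
  (ContinuousLinearMap.fst ℝ ℝ ℝ).prod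
    (b • ContinuousLinearMap.fst ℝ ℝ ℝ + c • ContinuousLinearMap.snd ℝ ℝ ℝ)

noncomputable def Mequiv (b c : ℝ) (hc : c ≠ 0) : (ℝ × ℝ) ≃L[ℝ] (ℝ × ℝ) :=
  ContinuousLinearEquiv.equivOfInverse (Jmap b c) (Jmap (-b/c) c⁻¹)
    (fun p => by
      simp only [Jmap, ContinuousLinearMap.prod_apply, ContinuousLinearMap.add_apply,
        ContinuousLinearMap.coe_smul', Pi.smul_apply, ContinuousLinearMap.coe_fst',
        ContinuousLinearMap.coe_snd', smul_eq_mul]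
      ext
      · simp
      · simp; field_simp; ring)
    (fun p => by
      simp only [Jmap, ContinuousLinearMap.prod_apply, ContinuousLinearMap.add_apply,
        ContinuousLinearMap.coe_smul', Pi.smul_apply, ContinuousLinearMap.coe_fst',
        ContinuousLinearMap.coe_snd', smul_eq_mul]
      ext
      · simp
      · simp; field_simp; ring)

lemma psi_hasFDerivAt {wm wp : ℝ} (t0 y0 : ℝ) :
    HasFDerivAt (Psi wm wp) (Jmap (w0 wm wp y0) (1 + t0 * w0d wm wp y0)) (t0, y0) := by
  have h1 : HasFDerivAt (fun p : ℝ × ℝ => p.1) (ContinuousLinearMap.fst ℝ ℝ ℝ) (t0, y0) :=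
    hasFDerivAt_fst
  have hw0 : HasFDerivAt (fun p : ℝ × ℝ => w0 wm wp p.2)
      (w0d wm wp y0 • ContinuousLinearMap.snd ℝ ℝ ℝ) (t0, y0) :=
    by have h := (hasDerivAt_w0 (wm := wm) (wp := wp) y0).comp_hasFDerivAt (t0, y0)
        (hasFDerivAt_snd : HasFDerivAt (Prod.snd : ℝ × ℝ → ℝ) (ContinuousLinearMap.snd ℝ ℝ ℝ) (t0, y0)); exact h
  have hmul := h1.mul hw0
  have hsum := hasFDerivAt_snd.add hmul
  have := h1.prodMk hsum
  refine this.congr_fderiv (Eq.symm ?_)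
  apply ContinuousLinearMap.ext
  intro p
  apply Prod.ext
  · simp [Jmap]
  · simp [Jmap, smul_eq_mul]
    ring

lemma Mequiv_coe (b c : ℝ) (hc : c ≠ 0) :
    (Mequiv b c hc : (ℝ × ℝ) →L[ℝ] (ℝ × ℝ)) = Jmap b c := by
  apply ContinuousLinearMap.ext
  intro p
  simp [Mequiv]

section YPart2
variable {wm wp : ℝ} (hw : wm < wp) {Y : ℝ → ℝ → ℝ}
  (hY : ∀ t x : ℝ, 0 ≤ t → Y t x + t * w0 wm wp (Y t x) = x)

include hw hY in
lemma Y_contDiffOn : ContDiffOn ℝ 2 (fun q : ℝ × ℝ => Y q.1 q.2) (Ici (0:ℝ) ×ˢ univ) := by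
  rintro ⟨t0, x0⟩ hq
  have ht0 : (0:ℝ) ≤ t0 := hq.1
  set y0 := Y t0 x0 with hy0
  have ha : Psi wm wp (t0, y0) = (t0, x0) := by
    simp only [Psi]
    exact Prod.ext rfl (hY t0 x0 ht0)
  set c := 1 + t0 * w0d wm wp y0 with hc'
  have hcpos : 0 < c := by have := w0d_pos hw y0; nlinarith
  have hfd : HasFDerivAt (Psi wm wp)
      ((Mequiv (w0 wm wp y0) c hcpos.ne' : (ℝ × ℝ) →L[ℝ] (ℝ × ℝ))) (t0, y0) := by
    rw [Mequiv_coe]; exact psi_hasFDerivAt t0 y0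
  have h12 : (2 : WithTop ℕ∞) ≠ 0 := by norm_num
  have hcd : ContDiffAt ℝ 2 (Psi wm wp) (t0, y0) := psi_contDiff.contDiffAt
  have hG : ContDiffAt ℝ 2 (hcd.localInverse hfd h12) (Psi wm wp (t0, y0)) :=
    hcd.to_localInverse hfd h12
  set G := hcd.localInverse hfd h12 with hG'
  have hstrict := hcd.hasStrictFDerivAt' hfd h12
  have hre : ∀ᶠ p in nhds (Psi wm wp (t0, y0)), Psi wm wp (G p) = p :=
    hstrict.eventually_right_inverse
  rw [ha] at hG hre
  have hsnd : ContDiffAt ℝ 2 (fun q : ℝ × ℝ => (G q).2) ((t0, x0) : ℝ × ℝ) :=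
    contDiffAt_snd.comp _ hG
  apply hsnd.contDiffWithinAt.congr_of_eventuallyEq
  · filter_upwards [hre.filter_mono nhdsWithin_le_nhds, self_mem_nhdsWithin] with q h1 h2
    have hq1 : (0:ℝ) ≤ q.1 := h2.1
    have hfst : (G q).1 = q.1 := by
      have := congrArg Prod.fst h1; simpa [Psi] using this
    have hsnd2 : (G q).2 + (G q).1 * w0 wm wp (G q).2 = q.2 := by
      have := congrArg Prod.snd h1; simpa [Psi] using this
    rw [hfst] at hsnd2
    exact Y_unique hw hY hq1 hsnd2
  · have : G (t0, x0) = (t0, y0) := by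
      rw [← ha]; exact hstrict.localInverse_apply_image
    rw [this]

include hw hY in
lemma Yt_hasDerivAt {t x : ℝ} (ht : 0 < t) :
    HasDerivAt (fun s => Y s x) (-(w0 wm wp (Y t x)) / (1 + t * w0d wm wp (Y t x))) t := by
  set y := Y t x with hy
  set c := 1 + t * w0d wm wp y with hc'
  have hcpos : 0 < c := by have := w0d_pos hw y; nlinarith
  have hmem : (Ici (0:ℝ) ×ˢ (univ : Set ℝ)) ∈ nhds ((t, x) : ℝ × ℝ) := by
    apply prod_mem_nhds _ univ_mem
    exact Ici_mem_nhds ht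
  have hjoint : ContDiffAt ℝ 2 (fun q : ℝ × ℝ => Y q.1 q.2) (t, x) :=
    (Y_contDiffOn hw hY).contDiffAt hmem
  have hdiff : DifferentiableAt ℝ (fun s => Y s x) t := by
    have h1 : DifferentiableAt ℝ (fun q : ℝ × ℝ => Y q.1 q.2) (t, x) :=
      hjoint.differentiableAt (by norm_num)
    have hg : DifferentiableAt ℝ (fun s : ℝ => (s, x)) t := differentiableAt_id.prodMk (differentiableAt_const x)
    exact h1.comp t hg
  set a := deriv (fun s => Y s x) t with ha'
  have hda : HasDerivAt (fun s => Y s x) a t := hdiff.hasDerivAt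
  have h1 : HasDerivAt (fun s => Y s x + s * w0 wm wp (Y s x))
      (a + (1 * w0 wm wp y + t * (w0d wm wp y * a))) t :=
    by have hc := (hasDerivAt_w0 (wm := wm) (wp := wp) y).comp t hda; exact hda.add ((hasDerivAt_id t).mul hc)
  have h2 : HasDerivAt (fun _ : ℝ => x) (a + (1 * w0 wm wp y + t * (w0d wm wp y * a))) t := by
    apply h1.congr_of_eventuallyEq
    filter_upwards [isOpen_Ioi.eventually_mem ht] with s hs
    exact (hY s x (le_of_lt hs)).symm
  have h3 : a + (1 * w0 wm wp y + t * (w0d wm wp y * a)) = 0 := by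
    have := (hasDerivAt_const t x).unique h2
    linarith [this]
  have ha2 : a = -(w0 wm wp y) / c := by
    rw [hc']
    rw [eq_div_iff (by rw [← hc']; exact hcpos.ne')]
    nlinarith [h3]
  rw [← ha2]
  exact hda

include hw hY in
lemma Yx_hasDerivAt {t : ℝ} (ht : 0 ≤ t) (x : ℝ) :
    HasDerivAt (fun x' => Y t x') (1 + t * w0d wm wp (Y t x))⁻¹ x := by
  set y0 := Y t x with hy0
  set c := 1 + t * w0d wm wp y0 with hc'
  have hcpos : 0 < c := by have := w0d_pos hw y0; nlinarith
  have hcd : ContDiffAt ℝ 2 (fun y => y + t * w0 wm wp y) y0 :=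
    (contDiff_id.add (contDiff_const.mul w0_contDiff)).contDiffAt
  have hstrict : HasStrictDerivAt (fun y => y + t * w0 wm wp y) c y0 :=
    hcd.hasStrictDerivAt' (psi_hasDerivAt t y0) (by norm_num)
  have hg : ∀ᶠ y in nhds y0, Y t (y + t * w0 wm wp y) = y :=
    Eventually.of_forall (fun y => Y_unique hw hY ht rfl)
  have := (hstrict.to_local_left_inverse hcpos.ne' hg).hasDerivAt
  have hpt : y0 + t * w0 wm wp y0 = x := hY t x ht
  rwa [hpt] at this

end YPart2

theorem stmt_4 (um up : ℝ) (hu : um < up)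
    (f : ℝ → ℝ) (hf : ContDiff ℝ 3 f)
    (hconv : ∀ u ∈ Set.Icc um up, 0 < deriv (deriv f) u)
    (linv : ℝ → ℝ) (hlinv : ∀ u ∈ Set.Icc um up, linv (deriv f u) = u)
    (Y : ℝ → ℝ → ℝ)
    (hY : ∀ t x : ℝ, 0 ≤ t → Y t x + t * w0 (deriv f um) (deriv f up) (Y t x) = x) :
    let Ur : ℝ → ℝ → ℝ := fun t x => linv (w0 (deriv f um) (deriv f up) (Y t x))
    ContDiffOn ℝ 2 (fun q : ℝ × ℝ => Ur q.1 q.2) (Set.Ici (0:ℝ) ×ˢ Set.univ) ∧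
    (∀ t x : ℝ, 0 < t →
      deriv (fun s => Ur s x) t + deriv (fun y => f (Ur t y)) x = 0) ∧
    (∀ x : ℝ, Ur 0 x
      = linv ((deriv f um + deriv f up) / 2 + ((deriv f up - deriv f um) / 2) * Real.tanh x)) ∧
    (∀ t : ℝ, 0 ≤ t →
      Tendsto (fun x => Ur t x) atTop (nhds up) ∧ Tendsto (fun x => Ur t x) atBot (nhds um)) ∧
    (∀ t x : ℝ, 0 ≤ t →
      um < Ur t x ∧ Ur t x < up ∧ 0 < deriv (fun y => Ur t y) x) := by
  intro Ur
  set wm := deriv f um with hwm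
  set wp := deriv f up with hwp
  have hw : wm < wp := l_smono hf hconv (left_mem_Icc.2 hu.le) (right_mem_Icc.2 hu.le) hu
  -- basic facts about values
  have hzmem : ∀ t x : ℝ, w0 wm wp (Y t x) ∈ Ioo wm wp := fun t x => w0_mem hw _
  have hUmem : ∀ t x : ℝ, Ur t x ∈ Ioo um up := fun t x =>
    (linv_spec hu hf hlinv _ (hzmem t x)).2
  have hderiv_eq : ∀ t x : ℝ, deriv f (Ur t x) = w0 wm wp (Y t x) := fun t x =>
    (linv_spec hu hf hlinv _ (hzmem t x)).1
  refine ⟨?_, ?_, ?_, ?_, ?_⟩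
  · -- ContDiffOn
    rintro q hq
    have hYcd := Y_contDiffOn hw hY q hq
    have hw0cd : ContDiffAt ℝ 2 (w0 wm wp) (Y q.1 q.2) := w0_contDiff.contDiffAt
    have hlcd : ContDiffAt ℝ 2 linv (w0 wm wp (Y q.1 q.2)) :=
      linv_contDiffAt hu hf hconv hlinv _ (hzmem q.1 q.2)
    have := hlcd.comp_contDiffWithinAt q (hw0cd.comp_contDiffWithinAt q hYcd)
    exact this
  · -- PDE
    intro t x ht
    set y := Y t x with hy
    set z := w0 wm wp y with hz
    set c := 1 + t * w0d wm wp y with hc'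
    have hcpos : 0 < c := by have := w0d_pos hw y; nlinarith
    have hlinvd : HasDerivAt linv (deriv (deriv f) (linv z))⁻¹ z :=
      linv_hasDerivAt hu hf hconv hlinv z (hzmem t x)
    set d := (deriv (deriv f) (linv z))⁻¹ with hd'
    have hUt : HasDerivAt (fun s => Ur s x) (d * (w0d wm wp y * (-z / c))) t := by
      have h1 := Yt_hasDerivAt hw hY ht (x := x)
      have h2 := (hasDerivAt_w0 (wm := wm) (wp := wp) y).comp t h1
      exact hlinvd.comp t h2
    have hUx : HasDerivAt (fun x' => Ur t x') (d * (w0d wm wp y * c⁻¹)) x := by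
      have h1 := Yx_hasDerivAt hw hY ht.le x
      have h2 := (hasDerivAt_w0 (wm := wm) (wp := wp) y).comp x h1
      exact hlinvd.comp x h2
    have hfd : HasDerivAt f (deriv f (Ur t x)) (Ur t x) :=
      ((hf.differentiable (by norm_num)) (Ur t x)).hasDerivAt
    have hfUx : HasDerivAt (fun x' => f (Ur t x')) (deriv f (Ur t x) * (d * (w0d wm wp y * c⁻¹))) x :=
      hfd.comp x hUx
    rw [hUt.deriv, hfUx.deriv, hderiv_eq t x]
    show d * (w0d wm wp y * (-z / c)) + z * (d * (w0d wm wp y * c⁻¹)) = 0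
    field_simp
    ring
  · -- initial data
    intro x
    have hY0 : Y 0 x = x := Y_unique hw hY le_rfl (by simp)
    show linv (w0 wm wp (Y 0 x)) = _
    rw [hY0]
    rfl
  · -- far-field limits
    intro t ht
    constructor
    · -- atTop
      have hYtop : Tendsto (fun x => Y t x) atTop atTop := by
        have hbound : ∀ x : ℝ, x - t * wp ≤ Y t x := by
          intro x
          have h1 := hY t x ht
          have h2 := (hzmem t x).2
          nlinarith [h2]
        have hbase : Tendsto (fun x : ℝ => x - t * wp) atTop atTop := by
          have : Tendsto (fun x : ℝ => x + -(t*wp)) atTop atTop :=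
            tendsto_atTop_add_const_right _ _ tendsto_id
          simpa [sub_eq_add_neg] using this
        exact tendsto_atTop_mono hbound hbase
      have hwtop : Tendsto (fun x => w0 wm wp (Y t x)) atTop (nhds wp) :=
        w0_tendsto_atTop.comp hYtop
      rw [tendsto_order]
      constructor
      · intro a ha
        set u' := max a ((um+up)/2) with hu''
        have hu'1 : um < u' := lt_of_lt_of_le (by linarith) (le_max_right _ _)
        have hu'2 : u' < up := max_lt ha (by linarith)
        have hlu' : deriv f u' < wp :=
          l_smono hf hconv ⟨hu'1.le, hu'2.le⟩ (right_mem_Icc.2 hu.le) hu'2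
        filter_upwards [hwtop.eventually (eventually_gt_nhds hlu')] with x hx
        have hzx := hzmem t x
        have hspec := linv_spec hu hf hlinv _ hzx
        by_contra hcon
        push_neg at hcon
        have hle : Ur t x ≤ u' := le_trans hcon (le_max_left _ _)
        have : deriv f (Ur t x) ≤ deriv f u' := by
          rcases eq_or_lt_of_le hle with h | h
          · rw [h]
          · exact (l_smono hf hconv (Ioo_subset_Icc_self hspec.2) ⟨hu'1.le, hu'2.le⟩ h).le
        rw [hspec.1] at this
        linarith
      · intro a ha
        exact Eventually.of_forall (fun x => lt_trans (hUmem t x).2 ha)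
    · -- atBot
      have hYbot : Tendsto (fun x => Y t x) atBot atBot := by
        have hbound : ∀ x : ℝ, Y t x ≤ x - t * wm := by
          intro x
          have h1 := hY t x ht
          have h2 := (hzmem t x).1
          nlinarith [h2]
        have hbase : Tendsto (fun x : ℝ => x - t * wm) atBot atBot := by
          have : Tendsto (fun x : ℝ => x + -(t*wm)) atBot atBot :=
            tendsto_atBot_add_const_right _ _ tendsto_id
          simpa [sub_eq_add_neg] using this
        exact tendsto_atBot_mono hbound hbase
      have hwbot : Tendsto (fun x => w0 wm wp (Y t x)) atBot (nhds wm) :=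
        w0_tendsto_atBot.comp hYbot
      rw [tendsto_order]
      constructor
      · intro a ha
        exact Eventually.of_forall (fun x => lt_of_lt_of_le ha (hUmem t x).1.le)
      · intro a ha
        set u' := min a ((um+up)/2) with hu''
        have hu'1 : um < u' := lt_min ha (by linarith)
        have hu'2 : u' < up := lt_of_le_of_lt (min_le_right _ _) (by linarith)
        have hlu' : wm < deriv f u' :=
          l_smono hf hconv (left_mem_Icc.2 hu.le) ⟨hu'1.le, hu'2.le⟩ hu'1
        filter_upwards [hwbot.eventually (eventually_lt_nhds hlu')] with x hx
        have hzx := hzmem t x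
        have hspec := linv_spec hu hf hlinv _ hzx
        by_contra hcon
        push_neg at hcon
        have hle : u' ≤ Ur t x := le_trans (min_le_left _ _) hcon
        have : deriv f u' ≤ deriv f (Ur t x) := by
          rcases eq_or_lt_of_le hle with h | h
          · rw [h]
          · exact (l_smono hf hconv ⟨hu'1.le, hu'2.le⟩ (Ioo_subset_Icc_self hspec.2) h).le
        rw [hspec.1] at this
        linarith
  · -- bounds and monotonicity
    intro t x ht
    refine ⟨(hUmem t x).1, (hUmem t x).2, ?_⟩
    set y := Y t x with hy
    set z := w0 wm wp y with hz
    set c := 1 + t * w0d wm wp y with hc'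
    have hcpos : 0 < c := by have := w0d_pos hw y; nlinarith
    have hlinvd : HasDerivAt linv (deriv (deriv f) (linv z))⁻¹ z :=
      linv_hasDerivAt hu hf hconv hlinv z (hzmem t x)
    have hUx : HasDerivAt (fun x' => Ur t x') ((deriv (deriv f) (linv z))⁻¹ * (w0d wm wp y * c⁻¹)) x := by
      have h1 := Yx_hasDerivAt hw hY ht x
      have h2 := (hasDerivAt_w0 (wm := wm) (wp := wp) y).comp x h1
      exact hlinvd.comp x h2
    rw [hUx.deriv]
    have hd2 : 0 < deriv (deriv f) (linv z) :=
      hconv _ (Ioo_subset_Icc_self (linv_spec hu hf hlinv _ (hzmem t x)).2)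
    have hw0d := w0d_pos hw y
    positivity
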